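/- For the (n−1)-gluing graph K_n +_{n−1} K'_n of two complete graphs on n vertices (n ≥ 5), the Ricci curvature of the edge (u_0, v_0) equals (2n−2)/(2n−1). -/

import Mathlib

open scoped Classical
noncomputable section

namespace OR

variable {V : Type*}

/-- The degree of a vertex. -/
def deg (G : SimpleGraph V) (x : V) : ℕ := Nat.card (G.neighborSet x)

/-- The simple random walk measure at a vertex. -/
def rw (G : SimpleGraph V) (x : V) : V → ℝ :=
  fun v => if G.Adj x v then ((deg G x : ℝ))⁻¹ else 0

/-- A coupling between two measures on the vertex set. -/
def IsCoupling (μ ν : V → ℝ) (A : V → V → ℝ) : Prop :=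
  (∀ u v, 0 ≤ A u v) ∧
  (Function.support fun p : V × V => A p.1 p.2).Finite ∧
  (∀ u, ∑ᶠ v, A u v = μ u) ∧ (∀ v, ∑ᶠ u, A u v = ν v)

/-- The 1-Wasserstein distance w.r.t. the graph distance. -/
def W (G : SimpleGraph V) (μ ν : V → ℝ) : ℝ :=
  sInf { r | ∃ A, IsCoupling μ ν A ∧ r = ∑ᶠ u, ∑ᶠ v, A u v * (G.dist u v : ℝ) }

/-- The Ollivier–Ricci curvature. -/
def ricci (G : SimpleGraph V) (x y : V) : ℝ :=
  1 - W G (rw G x) (rw G y) / (G.dist x y : ℝ)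

/-- The number of common neighbours of `x` and `y`. -/
def tri (G : SimpleGraph V) (x y : V) : ℕ := Nat.card {w | G.Adj x w ∧ G.Adj y w}



/-- Condition for a cross edge `u_i v_j` in the `m`-gluing graph. -/
def cross (m : ℕ) {n : ℕ} (i j : Fin n) : Prop :=
  ((i : ℕ) = 0 ∧ (j : ℕ) = 0) ∨ ((i : ℕ) = 0 ∧ 1 ≤ (j : ℕ) ∧ (j : ℕ) ≤ m) ∨
    ((j : ℕ) = 0 ∧ 1 ≤ (i : ℕ) ∧ (i : ℕ) ≤ m)

/-- Adjacency of the `m`-gluing graph: `Sum.inl` is `K_n`, `Sum.inr` is `K'_n`. -/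
def glueAdj (n m : ℕ) : Fin n ⊕ Fin n → Fin n ⊕ Fin n → Prop
  | .inl i, .inl j => i ≠ j
  | .inr i, .inr j => i ≠ j
  | .inl i, .inr j => cross m i j
  | .inr j, .inl i => cross m i j

/-- The `m`-gluing graph `K_n +_m K'_n`. -/
def glue (n m : ℕ) : SimpleGraph (Fin n ⊕ Fin n) where
  Adj := glueAdj n m
  symm := by
    constructor
    rintro (i | i) (j | j) h <;> simp only [glueAdj] at h ⊢
    · exact h.symm
    · exact h
    · exact h
    · exact h.symm
  loopless := by
    constructor
    rintro (i | i) h <;> simp only [glueAdj] at h <;> exact h rfl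

end OR



section Aux

variable {Vt : Type*} [Fintype Vt]

lemma deg_univ (G : SimpleGraph Vt) (x : Vt)
    (hx : ∀ w, G.Adj x w ↔ w ≠ x) : OR.deg G x = Fintype.card Vt - 1 := by
  have h : G.neighborSet x = {x}ᶜ := by
    ext w
    simp [SimpleGraph.mem_neighborSet, hx w]
  rw [OR.deg, h, Nat.card_eq_fintype_card, Fintype.card_compl_set, Set.card_singleton]

lemma W_univ (G : SimpleGraph Vt) (x y : Vt) (hxy : x ≠ y)
    (hx : ∀ w, G.Adj x w ↔ w ≠ x) (hy : ∀ w, G.Adj y w ↔ w ≠ y) :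
    OR.W G (OR.rw G x) (OR.rw G y) = ((OR.deg G x : ℝ))⁻¹ := by
  set c : ℝ := ((OR.deg G x : ℝ))⁻¹ with hcdef
  have hdxy : OR.deg G x = OR.deg G y := by
    rw [deg_univ G x hx, deg_univ G y hy]
  have hc0 : (0:ℝ) ≤ c := by positivity
  have hmu : ∀ w, OR.rw G x w = if w = x then 0 else c := by
    intro w
    by_cases h : w = x <;> simp [OR.rw, hx, h, hcdef]
  have hnu : ∀ w, OR.rw G y w = if w = y then 0 else c := by
    intro w
    by_cases h : w = y <;> simp [OR.rw, hy, h, hcdef, hdxy]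
  have hdy : ∀ q, q ≠ y → G.dist y q = 1 := fun q hq =>
    SimpleGraph.dist_eq_one_iff_adj.mpr ((hy q).mpr hq)
  -- the explicit optimal coupling
  set A : Vt → Vt → ℝ := fun p q =>
    if p = y ∧ q = x then c else if q = p ∧ p ≠ x ∧ p ≠ y then c else 0 with hAdef
  have hA0 : ∀ p q, 0 ≤ A p q := by
    intro p q
    simp only [hAdef]
    split_ifs <;> simp [hc0]
  have hrow : ∀ p, ∑ q, A p q = OR.rw G x p := by
    intro p
    rw [hmu p]
    by_cases hpx : p = x
    · have h0 : ∀ q, A p q = 0 := by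
        intro q
        simp only [hAdef]
        rw [if_neg (fun h => hxy (hpx.symm.trans h.1)), if_neg (fun h => h.2.1 hpx)]
      rw [if_pos hpx]
      exact Finset.sum_eq_zero fun q _ => h0 q
    · rw [if_neg hpx]
      by_cases hpy : p = y
      · have h1 : ∀ q, A p q = if q = x then c else 0 := by
          intro q
          simp only [hAdef]
          by_cases hq : q = x
          · rw [if_pos ⟨hpy, hq⟩, if_pos hq]
          · rw [if_neg (fun h => hq h.2), if_neg (fun h => h.2.2 hpy), if_neg hq]
        simp only [h1]
        simp
      · have h1 : ∀ q, A p q = if q = p then c else 0 := by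
          intro q
          simp only [hAdef]
          by_cases hq : q = p
          · rw [if_neg (fun h => hpy h.1), if_pos ⟨hq, hpx, hpy⟩, if_pos hq]
          · rw [if_neg (fun h => hpy h.1), if_neg (fun h => hq h.1), if_neg hq]
        simp only [h1]
        simp
  have hcol : ∀ q, ∑ p, A p q = OR.rw G y q := by
    intro q
    rw [hnu q]
    by_cases hqx : q = x
    · have hqy : q ≠ y := fun h => hxy (hqx.symm.trans h)
      have h1 : ∀ p, A p q = if p = y then c else 0 := by
        intro p
        simp only [hAdef]
        by_cases hp : p = y
        · rw [if_pos ⟨hp, hqx⟩, if_pos hp]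
        · rw [if_neg (fun h => hp h.1),
            if_neg (fun h => h.2.1 (h.1.symm.trans hqx)), if_neg hp]
      rw [if_neg hqy]
      simp only [h1]
      simp
    · by_cases hqy : q = y
      · have h0 : ∀ p, A p q = 0 := by
          intro p
          simp only [hAdef]
          rw [if_neg (fun h => hqx h.2), if_neg (fun h => h.2.2 (h.1.symm.trans hqy))]
        rw [if_pos hqy]
        exact Finset.sum_eq_zero fun p _ => h0 p
      · have h1 : ∀ p, A p q = if p = q then c else 0 := by
          intro p
          simp only [hAdef]
          by_cases hp : p = q
          · rw [if_neg (fun h => hqx h.2),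
              if_pos ⟨hp.symm, (show p ≠ x by rw [hp]; exact hqx),
                (show p ≠ y by rw [hp]; exact hqy)⟩, if_pos hp]
          · rw [if_neg (fun h => hqx h.2), if_neg (fun h => hp h.1.symm), if_neg hp]
        rw [if_neg hqy]
        simp only [h1]
        simp
  have hcoup : OR.IsCoupling (OR.rw G x) (OR.rw G y) A := by
    refine ⟨hA0, Set.toFinite _, ?_, ?_⟩
    · intro u; rw [finsum_eq_sum_of_fintype]; exact hrow u
    · intro v; rw [finsum_eq_sum_of_fintype]; exact hcol v
  have hcost : (∑ᶠ u, ∑ᶠ v, A u v * (G.dist u v : ℝ)) = c := by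
    have hpt : ∀ p q, A p q * (G.dist p q : ℝ) = if p = y ∧ q = x then c else 0 := by
      intro p q
      by_cases h1 : p = y ∧ q = x
      · obtain ⟨hp, hq⟩ := h1
        have hd : G.dist p q = 1 := by rw [hp, hq]; exact hdy x hxy
        have hA1 : A p q = c := by
          simp only [hAdef]
          rw [if_pos ⟨hp, hq⟩]
        rw [hA1, hd, if_pos ⟨hp, hq⟩, Nat.cast_one, mul_one]
      · by_cases hq : q = p
        · rw [hq, SimpleGraph.dist_self, Nat.cast_zero, mul_zero,
            if_neg (fun h => hxy (h.2.symm.trans h.1))]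
        · have h3 : A p q = 0 := by
            simp only [hAdef]
            rw [if_neg h1, if_neg (fun h => hq h.1)]
          rw [h3, zero_mul, if_neg h1]
    simp only [finsum_eq_sum_of_fintype, hpt]
    have hin : ∀ p, (∑ q, if p = y ∧ q = x then c else 0) = if p = y then c else 0 := by
      intro p
      by_cases h : p = y <;> simp [h]
    simp only [hin]
    simp
  have hmem : c ∈ { r | ∃ B, OR.IsCoupling (OR.rw G x) (OR.rw G y) B ∧
      r = ∑ᶠ u, ∑ᶠ v, B u v * (G.dist u v : ℝ) } := ⟨A, hcoup, hcost.symm⟩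
  have hlb : ∀ r ∈ { r | ∃ B, OR.IsCoupling (OR.rw G x) (OR.rw G y) B ∧
      r = ∑ᶠ u, ∑ᶠ v, B u v * (G.dist u v : ℝ) }, c ≤ r := by
    rintro r ⟨B, ⟨hB0, _, hBrow, hBcol⟩, rfl⟩
    set f : Vt → ℝ := fun w => if w = y then 1 else 0 with hfdef
    have hf : ∀ p q, f p - f q ≤ (G.dist p q : ℝ) := by
      intro p q
      by_cases hp : p = y
      · by_cases hq : q = p
        · simp [hq]
        · have hqy : q ≠ y := fun h => hq (h.trans hp.symm)
          have hd : G.dist p q = 1 := by rw [hp]; exact hdy q hqy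
          have hfq : f q = 0 := by simp [hfdef, hqy]
          have hfp : f p = 1 := by simp [hfdef, hp]
          rw [hd, hfp, hfq, Nat.cast_one]
          norm_num
      · have h1 : f p = 0 := by simp [hfdef, hp]
        have h2 : (0:ℝ) ≤ f q := by simp only [hfdef]; split_ifs <;> norm_num
        have h3 : (0:ℝ) ≤ (G.dist p q : ℝ) := by positivity
        linarith
    have hBrow' : ∀ p, ∑ q, B p q = OR.rw G x p := by
      intro p; rw [← finsum_eq_sum_of_fintype]; exact hBrow p
    have hBcol' : ∀ q, ∑ p, B p q = OR.rw G y q := by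
      intro q; rw [← finsum_eq_sum_of_fintype]; exact hBcol q
    have key : c = ∑ p, ∑ q, B p q * (f p - f q) := by
      have e1 : ∀ p, ∑ q, B p q * (f p - f q)
          = (∑ q, B p q) * f p - (∑ q, B p q * f q) := by
        intro p
        rw [Finset.sum_mul, ← Finset.sum_sub_distrib]
        congr 1; ext q; ring
      have e2 : ∑ p, ∑ q, B p q * (f p - f q)
          = (∑ p, (∑ q, B p q) * f p) - (∑ p, ∑ q, B p q * f q) := by
        simp only [e1, Finset.sum_sub_distrib]
      rw [e2, Finset.sum_comm (f := fun p q => B p q * f q)]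
      have e3 : ∀ q, ∑ p, B p q * f q = (∑ p, B p q) * f q := by
        intro q; rw [Finset.sum_mul]
      simp only [e3, hBrow', hBcol', hmu, hnu]
      have e4 : (∑ p, (if p = x then (0:ℝ) else c) * f p) = c := by
        have h : ∀ p, (if p = x then (0:ℝ) else c) * f p
            = if p = y then c else 0 := by
          intro p
          by_cases hp : p = y
          · have hpx : p ≠ x := fun h => hxy (h.symm.trans hp)
            have hfp : f p = 1 := by simp [hfdef, hp]
            rw [if_neg hpx, if_pos hp, hfp, mul_one]
          · have hfp : f p = 0 := by simp [hfdef, hp]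
            rw [hfp, mul_zero, if_neg hp]
        simp only [h]
        simp
      have e5 : (∑ q, (if q = y then (0:ℝ) else c) * f q) = 0 := by
        have h : ∀ q, (if q = y then (0:ℝ) else c) * f q = 0 := by
          intro q
          by_cases hq : q = y
          · rw [if_pos hq, zero_mul]
          · have hfq : f q = 0 := by simp [hfdef, hq]
            rw [hfq, mul_zero]
        simp only [h]
        simp
      rw [e4, e5]
      ring
    rw [key, finsum_eq_sum_of_fintype]
    refine Finset.sum_le_sum fun p _ => ?_
    rw [finsum_eq_sum_of_fintype]
    refine Finset.sum_le_sum fun q _ => ?_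
    exact mul_le_mul_of_nonneg_left (hf p q) (hB0 p q)
  rw [OR.W]
  exact le_antisymm (csInf_le ⟨c, hlb⟩ hmem) (le_csInf ⟨c, hmem⟩ hlb)

end Aux


lemma adj_inl0 (n : ℕ) (hn : 5 ≤ n) (w : Fin n ⊕ Fin n) :
    (OR.glue n (n-1)).Adj (Sum.inl (⟨0, lt_of_lt_of_le (Nat.succ_pos 4) hn⟩ : Fin n)) w ↔
      w ≠ Sum.inl (⟨0, lt_of_lt_of_le (Nat.succ_pos 4) hn⟩ : Fin n) := by
  rcases w with j | j
  · show (⟨0, by omega⟩ : Fin n) ≠ j ↔ _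
    simp only [ne_eq, Sum.inl.injEq]
    exact ne_comm
  · show OR.cross (n-1) (⟨0, by omega⟩ : Fin n) j ↔ _
    have hj := j.isLt
    constructor
    · intro _
      simp
    · intro _
      rcases Nat.eq_zero_or_pos (j : ℕ) with h | h
      · exact Or.inl ⟨rfl, h⟩
      · exact Or.inr (Or.inl ⟨rfl, h, by omega⟩)

lemma adj_inr0 (n : ℕ) (hn : 5 ≤ n) (w : Fin n ⊕ Fin n) :
    (OR.glue n (n-1)).Adj (Sum.inr (⟨0, lt_of_lt_of_le (Nat.succ_pos 4) hn⟩ : Fin n)) w ↔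
      w ≠ Sum.inr (⟨0, lt_of_lt_of_le (Nat.succ_pos 4) hn⟩ : Fin n) := by
  rcases w with j | j
  · show OR.cross (n-1) j (⟨0, by omega⟩ : Fin n) ↔ _
    have hj := j.isLt
    constructor
    · intro _
      simp
    · intro _
      rcases Nat.eq_zero_or_pos (j : ℕ) with h | h
      · exact Or.inl ⟨h, rfl⟩
      · exact Or.inr (Or.inr ⟨rfl, h, by omega⟩)
  · show (⟨0, by omega⟩ : Fin n) ≠ j ↔ _
    simp only [ne_eq, Sum.inr.injEq]
    exact ne_comm

theorem glue_ricci_bridge (n : ℕ) (hn : 5 ≤ n) :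
    OR.ricci (OR.glue n (n - 1)) (Sum.inl (⟨0, by omega⟩ : Fin n))
      (Sum.inr (⟨0, by omega⟩ : Fin n)) = (2 * (n : ℝ) - 2) / (2 * (n : ℝ) - 1) := by
  have hxy : (Sum.inl (⟨0, by omega⟩ : Fin n) : Fin n ⊕ Fin n)
      ≠ Sum.inr (⟨0, by omega⟩ : Fin n) := by simp
  have hx := adj_inl0 n hn
  have hy := adj_inr0 n hn
  have hW := W_univ _ _ _ hxy hx hy
  have hdist : (OR.glue n (n-1)).dist (Sum.inl (⟨0, by omega⟩ : Fin n))
      (Sum.inr (⟨0, by omega⟩ : Fin n)) = 1 :=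
    SimpleGraph.dist_eq_one_iff_adj.mpr ((hx _).mpr hxy.symm)
  have hdeg : OR.deg (OR.glue n (n-1)) (Sum.inl (⟨0, by omega⟩ : Fin n)) = 2*n - 1 := by
    rw [deg_univ _ _ hx]
    simp only [Fintype.card_sum, Fintype.card_fin]
    omega
  rw [OR.ricci, hW, hdist, hdeg]
  have hcast : ((2 * n - 1 : ℕ) : ℝ) = 2 * (n : ℝ) - 1 := by
    have h1 : (1:ℕ) ≤ 2 * n := by omega
    push_cast [Nat.cast_sub h1]
    ring
  rw [hcast, Nat.cast_one, div_one]
  have h2 : (2 * (n : ℝ) - 1) ≠ 0 := by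
    have h5 : (5:ℝ) ≤ (n:ℝ) := by exact_mod_cast hn
    nlinarith
  field_simp
  ring
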